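/- Every square matrix over a field is the product of two symmetric matrices over that field. -/

import Mathlib

open Polynomial DirectSum

section GoodForm

variable (F : Type*) [Field F]

/-- A symmetric, nondegenerate, `F[X]`-balanced `F`-bilinear form on an `F[X]`-module. -/
structure GoodForm (N : Type*) [AddCommGroup N] [Module (Polynomial F) N]
    [Module F N] [IsScalarTower F (Polynomial F) N] where
  B : N → N → F
  symm : ∀ x y, B x y = B y x
  add_left : ∀ x x' y, B (x + x') y = B x y + B x' y
  smul_left : ∀ (c : F) (x y : N), B (c • x) y = c * B x y
  balanced : ∀ (r : Polynomial F) (x y : N), B (r • x) y = B x (r • y)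
  nondeg : ∀ x, (∀ y, B x y = 0) → x = 0

variable {F}
variable {N N' : Type*} [AddCommGroup N] [Module (Polynomial F) N]
    [Module F N] [IsScalarTower F (Polynomial F) N]
    [AddCommGroup N'] [Module (Polynomial F) N']
    [Module F N'] [IsScalarTower F (Polynomial F) N']

theorem GoodForm.add_right (g : GoodForm F N) (x y y' : N) :
    g.B x (y + y') = g.B x y + g.B x y' := by
  rw [g.symm, g.add_left, g.symm y, g.symm y']

theorem GoodForm.smul_right (g : GoodForm F N) (c : F) (x y : N) :
    g.B x (c • y) = c * g.B x y := by
  rw [g.symm, g.smul_left, g.symm]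

theorem GoodForm.zero_left (g : GoodForm F N) (y : N) : g.B 0 y = 0 := by
  have := g.smul_left 0 0 y
  simpa using this

theorem GoodForm.zero_right (g : GoodForm F N) (x : N) : g.B x 0 = 0 := by
  rw [g.symm]; exact g.zero_left x

/-- Transport a good form along an `F[X]`-linear equivalence. -/
noncomputable def GoodForm.comp (e : N ≃ₗ[Polynomial F] N') (g : GoodForm F N') :
    GoodForm F N where
  B x y := g.B (e x) (e y)
  symm x y := g.symm _ _
  add_left x x' y := by rw [map_add, g.add_left]
  smul_left c x y := by
    rw [← algebraMap_smul (Polynomial F) c x, map_smul, algebraMap_smul, g.smul_left]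
  balanced r x y := by rw [map_smul, map_smul, g.balanced]
  nondeg x hx := by
    have : e x = 0 := by
      refine g.nondeg _ fun y => ?_
      simpa using hx (e.symm y)
    simpa using congrArg e.symm this

end GoodForm

section DirectSumForm

variable {F : Type*} [Field F] {ι : Type*} [Fintype ι] [DecidableEq ι]
variable {N : ι → Type*} [∀ i, AddCommGroup (N i)] [∀ i, Module (Polynomial F) (N i)]
  [∀ i, Module F (N i)] [∀ i, IsScalarTower F (Polynomial F) (N i)]

/-- Direct sum of good forms. -/
noncomputable def GoodForm.directSum (g : ∀ i, GoodForm F (N i)) :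
    GoodForm F (⨁ i, N i) where
  B x y := ∑ i, (g i).B (x i) (y i)
  symm x y := by dsimp only; simp_rw [fun i => (g i).symm (x i) (y i)]
  add_left x x' y := by
    dsimp only
    simp_rw [DirectSum.add_apply, fun i => (g i).add_left (x i) (x' i) (y i),
      Finset.sum_add_distrib]
  smul_left c x y := by
    dsimp only
    simp_rw [DirectSum.smul_apply, fun i => (g i).smul_left c (x i) (y i), Finset.mul_sum]
  balanced r x y := by
    dsimp only
    simp_rw [DirectSum.smul_apply, fun i => (g i).balanced r (x i) (y i)]
  nondeg x hx := by
    dsimp only at hx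
    refine DFinsupp.ext fun i => ?_
    simp only [DFinsupp.zero_apply]
    refine (g i).nondeg _ fun y => ?_
    have h := hx (DirectSum.of N i y)
    rw [Finset.sum_eq_single i] at h
    · rwa [DirectSum.of_eq_same] at h
    · intro j _ hj
      rw [DirectSum.of_eq_of_ne _ _ _ hj, (g j).zero_right]
    · simp
end DirectSumForm

section Cyclic

variable {F : Type*} [Field F]

open EuclideanDomain in
/-- A good form on `F[X] ⧸ (q)` for monic `q`. -/
noncomputable def GoodForm.cyclicMonic {q : Polynomial F} (hq : q.Monic) :
    GoodForm F (Polynomial F ⧸ (Submodule.span (Polynomial F) {q})) := by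
  classical
  by_cases hd0 : q.natDegree = 0
  · -- q = 1, quotient is trivial
    have hq1 : q = 1 := Polynomial.eq_one_of_monic_natDegree_zero hq hd0
    haveI : Subsingleton (Polynomial F ⧸ (Submodule.span (Polynomial F) {q})) := by
      rw [Submodule.Quotient.subsingleton_iff, hq1, Ideal.submodule_span_eq,
        Ideal.span_singleton_one]
    exact
      { B := fun _ _ => 0
        symm := fun _ _ => rfl
        add_left := fun _ _ _ => by ring
        smul_left := fun _ _ _ => by ring
        balanced := fun _ _ _ => rfl
        nondeg := fun x _ => Subsingleton.elim x 0 }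
  · have hdpos : 0 < q.natDegree := Nat.pos_of_ne_zero hd0
    set d := q.natDegree with hd
    have hqne : q ≠ 0 := hq.ne_zero
    -- the linear functional
    set μ : Polynomial F → F := fun f => (f %ₘ q).coeff (d - 1) with hμ
    have μ_dvd : ∀ a, q ∣ a → μ a = 0 := by
      intro a ha
      simp only [hμ, (Polynomial.modByMonic_eq_zero_iff_dvd hq).mpr ha, Polynomial.coeff_zero]
    have μ_congr : ∀ a b, q ∣ a - b → μ a = μ b := by
      intro a b h
      have : (a - b) %ₘ q = 0 := (Polynomial.modByMonic_eq_zero_iff_dvd hq).mpr h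
      rw [Polynomial.sub_modByMonic] at this
      simp only [hμ]
      rw [sub_eq_zero] at this
      rw [this]
    set mk : Polynomial F → (Polynomial F ⧸ (Submodule.span (Polynomial F) {q})) :=
      Submodule.Quotient.mk with hmk
    have hsur : Function.Surjective mk := Submodule.Quotient.mk_surjective _
    have hdvd_of_eq : ∀ a b, mk a = mk b → q ∣ a - b := by
      intro a b h
      have := (Submodule.Quotient.eq _).mp h
      rwa [Ideal.submodule_span_eq, Ideal.mem_span_singleton] at this
    set B : (Polynomial F ⧸ (Submodule.span (Polynomial F) {q})) →
        (Polynomial F ⧸ (Submodule.span (Polynomial F) {q})) → F :=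
      fun x y => μ (Quotient.out x * Quotient.out y) with hB
    have hout : ∀ x, mk (Quotient.out x) = x := by
      intro x
      rw [hmk, ← Submodule.Quotient.mk''_eq_mk]
      exact Quotient.out_eq' x
    have B_mk : ∀ f g, B (mk f) (mk g) = μ (f * g) := by
      intro f g
      apply μ_congr
      have h1 : q ∣ Quotient.out (mk f) - f := hdvd_of_eq _ _ (by rw [hout])
      have h2 : q ∣ Quotient.out (mk g) - g := hdvd_of_eq _ _ (by rw [hout])
      have : Quotient.out (mk f) * Quotient.out (mk g) - f * g =
          (Quotient.out (mk f) - f) * Quotient.out (mk g) + f * (Quotient.out (mk g) - g) := by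
        ring
      rw [this]
      exact dvd_add (h1.mul_right _) (h2.mul_left _)
    refine
      { B := B
        symm := ?_
        add_left := ?_
        smul_left := ?_
        balanced := ?_
        nondeg := ?_ }
    · intro x y
      obtain ⟨f, rfl⟩ := hsur x; obtain ⟨g, rfl⟩ := hsur y
      rw [B_mk, B_mk, mul_comm]
    · intro x x' y
      obtain ⟨f, rfl⟩ := hsur x; obtain ⟨f', rfl⟩ := hsur x'; obtain ⟨g, rfl⟩ := hsur y
      rw [show mk f + mk f' = mk (f + f') from (Submodule.Quotient.mk_add _).symm,
        B_mk, B_mk, B_mk]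
      simp only [hμ, add_mul, Polynomial.add_modByMonic, Polynomial.coeff_add]
    · intro c x y
      obtain ⟨f, rfl⟩ := hsur x; obtain ⟨g, rfl⟩ := hsur y
      rw [show c • mk f = mk (c • f) from (Submodule.Quotient.mk_smul _ _ _).symm, B_mk, B_mk]
      simp only [hμ, smul_mul_assoc, Polynomial.smul_modByMonic, Polynomial.coeff_smul,
        smul_eq_mul]
    · intro r x y
      obtain ⟨f, rfl⟩ := hsur x; obtain ⟨g, rfl⟩ := hsur y
      rw [show r • mk f = mk (r * f) from by
          rw [← smul_eq_mul]; exact (Submodule.Quotient.mk_smul _ _ _).symm,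
        show r • mk g = mk (r * g) from by
          rw [← smul_eq_mul]; exact (Submodule.Quotient.mk_smul _ _ _).symm,
        B_mk, B_mk]
      ring_nf
    · intro x hx
      obtain ⟨f, rfl⟩ := hsur x
      by_contra hne
      have hndvd : ¬ q ∣ f := by
        intro h
        apply hne
        rw [hmk, Submodule.Quotient.mk_eq_zero, Ideal.submodule_span_eq,
          Ideal.mem_span_singleton]
        exact h
      set g := EuclideanDomain.gcd f q with hg
      have hg0 : g ≠ 0 := by
        intro h
        exact hqne ((EuclideanDomain.gcd_eq_zero_iff).mp h).2
      have hgdvdq : g ∣ q := gcd_dvd_right f q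
      have hgdvdf : g ∣ f := gcd_dvd_left f q
      have hglt : g.natDegree < d := by
        rcases lt_or_eq_of_le (Polynomial.natDegree_le_of_dvd hgdvdq hqne) with h | h
        · exact h
        · exfalso
          obtain ⟨h', hh'⟩ := hgdvdq
          have hh'0 : h' ≠ 0 := by rintro rfl; rw [mul_zero] at hh'; exact hqne hh'
          have : d = g.natDegree + h'.natDegree := by
            rw [hd, hh', Polynomial.natDegree_mul hg0 hh'0]
          have hh'd : h'.natDegree = 0 := by omega
          obtain ⟨c, hc⟩ := Polynomial.natDegree_eq_zero.mp hh'd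
          have hc0 : c ≠ 0 := by
            rintro rfl; rw [Polynomial.C_0] at hc; exact hh'0 hc.symm
          apply hndvd
          refine dvd_trans ⟨Polynomial.C c⁻¹, ?_⟩ hgdvdf
          rw [hh', ← hc, mul_assoc, ← Polynomial.C_mul, mul_inv_cancel₀ hc0,
            Polynomial.C_1, mul_one]
      set k := d - 1 - g.natDegree with hk
      have hsum : g.natDegree + k = d - 1 := by omega
      have hkey := hx (mk (gcdA f q * Polynomial.X ^ k))
      rw [B_mk] at hkey
      have hbez := EuclideanDomain.gcd_eq_gcd_ab f q
      have hμeq : μ (f * (gcdA f q * Polynomial.X ^ k)) = μ (g * Polynomial.X ^ k) := by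
        apply μ_congr
        refine ⟨-(gcdB f q * Polynomial.X ^ k), ?_⟩
        rw [hg, hbez]; ring
      have hgXne : g * Polynomial.X ^ k ≠ 0 := by
        exact mul_ne_zero hg0 (pow_ne_zero _ Polynomial.X_ne_zero)
      have hdeg : (g * Polynomial.X ^ k).natDegree = d - 1 := by
        rw [Polynomial.natDegree_mul hg0 (pow_ne_zero _ Polynomial.X_ne_zero),
          Polynomial.natDegree_X_pow]
        exact hsum
      have hmod : (g * Polynomial.X ^ k) %ₘ q = g * Polynomial.X ^ k := by
        rw [Polynomial.modByMonic_eq_self_iff hq]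
        calc (g * Polynomial.X ^ k).degree ≤ ((d - 1 : ℕ) : WithBot ℕ) := by
              rw [← hdeg]; exact Polynomial.degree_le_natDegree
          _ < ((d : ℕ) : WithBot ℕ) := Nat.cast_lt.mpr (by omega)
          _ = q.degree := (Polynomial.degree_eq_natDegree hqne).symm
      have : μ (g * Polynomial.X ^ k) = g.leadingCoeff := by
        simp only [hμ, hmod]
        rw [show d - 1 = g.natDegree + k from hsum.symm, Polynomial.coeff_mul_X_pow]
        rfl
      rw [hμeq, this] at hkey
      exact (Polynomial.leadingCoeff_ne_zero.mpr hg0) hkey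

/-- A good form on `F[X] ⧸ (q)` for any nonzero `q`. -/
noncomputable def GoodForm.cyclic {q : Polynomial F} (hq : q ≠ 0) :
    GoodForm F (Polynomial F ⧸ (Submodule.span (Polynomial F) {q})) := by
  have hassoc : Associated q (q * Polynomial.C q.leadingCoeff⁻¹) :=
    (associated_mul_unit_left q _
      (Polynomial.isUnit_C.mpr (isUnit_iff_ne_zero.mpr (inv_ne_zero (Polynomial.leadingCoeff_ne_zero.mpr hq))))).symm
  have hsp : Submodule.span (Polynomial F) {q} =
      Submodule.span (Polynomial F) {q * Polynomial.C q.leadingCoeff⁻¹} := by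
    rw [Ideal.submodule_span_eq, Ideal.submodule_span_eq]
    exact Ideal.span_singleton_eq_span_singleton.mpr hassoc
  exact (GoodForm.cyclicMonic (Polynomial.monic_mul_leadingCoeff_inv hq)).comp
    (Submodule.quotEquivOfEq _ _ hsp)

end Cyclic

theorem matrix_eq_product_of_two_symmetric (F : Type*) [Field F] (n : ℕ)
    (A : Matrix (Fin n) (Fin n) F) :
    ∃ S T : Matrix (Fin n) (Fin n) F,
      S.transpose = S ∧ T.transpose = T ∧ A = S * T := by
  classical
  set φ := A.mulVecLin with hφ
  set of := Module.AEval.of F (Fin n → F) φ with hof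
  -- the `F[X]`-module `Fⁿ` (with `X` acting as `A`) is finitely generated torsion
  have htors : Module.IsTorsion (Polynomial F) (Module.AEval' φ) := by
    intro x
    refine ⟨⟨φ.charpoly, mem_nonZeroDivisors_of_ne_zero φ.charpoly_monic.ne_zero⟩, ?_⟩
    obtain ⟨m, rfl⟩ := of.surjective x
    rw [Submonoid.smul_def, ← Module.AEval.of_aeval_smul]
    simp [LinearMap.aeval_self_charpoly]
  obtain ⟨ι, fι, p, hp, e, ⟨eqv⟩⟩ := Module.equiv_directSum_of_isTorsion htors
  haveI := fι
  haveI : DecidableEq ι := Classical.decEq ι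
  -- a good form on it
  have gform : GoodForm F (Module.AEval' φ) :=
    (GoodForm.directSum (fun i => GoodForm.cyclic (pow_ne_zero (e i) (hp i).ne_zero))).comp eqv
  -- the corresponding bilinear form on `Fⁿ`
  set Bl : (Fin n → F) →ₗ[F] (Fin n → F) →ₗ[F] F :=
    LinearMap.mk₂ F (fun x y => gform.B (of x) (of y))
      (fun x x' y => by rw [map_add, gform.add_left])
      (fun c x y => by rw [map_smul, gform.smul_left]; rfl)
      (fun x y y' => by rw [map_add, gform.add_right])
      (fun c x y => by rw [map_smul, gform.smul_right]; rfl) with hBl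
  have Bl_apply : ∀ x y, Bl x y = gform.B (of x) (of y) := fun _ _ => rfl
  have Bl_symm : ∀ x y, Bl x y = Bl y x := fun x y => gform.symm _ _
  have Bl_bal : ∀ x y, Bl (A.mulVec x) y = Bl x (A.mulVec y) := by
    intro x y
    rw [Bl_apply, Bl_apply]
    have h1 : of (A.mulVec x) = (Polynomial.X : Polynomial F) • of x :=
      (Module.AEval.X_smul_of φ x).symm
    have h2 : of (A.mulVec y) = (Polynomial.X : Polynomial F) • of y :=
      (Module.AEval.X_smul_of φ y).symm
    rw [h1, h2, gform.balanced]
  -- decomposition of vectors into standard basis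
  have hv : ∀ v : Fin n → F, v = ∑ i, v i • (Pi.single i 1 : Fin n → F) := by
    intro v
    funext r
    rw [Finset.sum_apply]
    simp [Pi.single_apply, mul_comm]
  set H : Matrix (Fin n) (Fin n) F :=
    Matrix.of fun i j => Bl (Pi.single i 1) (Pi.single j 1) with hH
  have key1 : ∀ i j, (Matrix.transpose A * H) i j = Bl (A.mulVec (Pi.single i 1)) (Pi.single j 1) := by
    intro i j
    rw [Matrix.mul_apply]
    rw [show A.mulVec (Pi.single i 1) = ∑ k, A k i • (Pi.single k 1 : Fin n → F) by
      conv_lhs => rw [hv (A.mulVec (Pi.single i 1))]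
      refine Finset.sum_congr rfl fun k _ => ?_
      congr 1
      simp [Matrix.mulVec_single]]
    rw [map_sum]
    simp only [LinearMap.sum_apply, LinearMap.map_smul, LinearMap.smul_apply, smul_eq_mul]
    refine Finset.sum_congr rfl fun k _ => ?_
    rw [Matrix.transpose_apply]
    rfl
  have key2 : ∀ i j, (H * A) i j = Bl (Pi.single i 1) (A.mulVec (Pi.single j 1)) := by
    intro i j
    rw [Matrix.mul_apply]
    rw [show A.mulVec (Pi.single j 1) = ∑ k, A k j • (Pi.single k 1 : Fin n → F) by
      conv_lhs => rw [hv (A.mulVec (Pi.single j 1))]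
      refine Finset.sum_congr rfl fun k _ => ?_
      congr 1
      simp [Matrix.mulVec_single]]
    rw [map_sum]
    refine Finset.sum_congr rfl fun k _ => ?_
    rw [LinearMap.map_smul, smul_eq_mul, mul_comm]
    rfl
  have hHsymm : H.transpose = H := by
    ext i j
    rw [Matrix.transpose_apply]
    exact Bl_symm _ _
  have hcomm : Matrix.transpose A * H = H * A := by
    ext i j
    rw [key1, key2, Bl_bal]
  have hdet : H.det ≠ 0 := by
    intro h0
    obtain ⟨v, hv0, hHv⟩ := (Matrix.exists_mulVec_eq_zero_iff).mpr h0
    apply hv0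
    have h1 : ∀ i, Bl (Pi.single i 1) v = 0 := by
      intro i
      have hi := congrFun hHv i
      rw [Matrix.mulVec, dotProduct] at hi
      rw [show (Bl (Pi.single i 1)) v = ∑ j, H i j * v j by
        conv_lhs => rw [hv v]
        rw [map_sum]
        refine Finset.sum_congr rfl fun j _ => ?_
        rw [LinearMap.map_smul, smul_eq_mul, mul_comm]
        rfl]
      exact hi
    have hBv : ∀ y, gform.B (of v) y = 0 := by
      intro y
      obtain ⟨w, rfl⟩ := of.surjective y
      rw [← Bl_apply, Bl_symm]
      conv_lhs => rw [hv w]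
      rw [map_sum, LinearMap.sum_apply]
      refine Finset.sum_eq_zero fun i _ => ?_
      rw [LinearMap.map_smul, LinearMap.smul_apply, smul_eq_mul, h1, mul_zero]
    have : of v = 0 := gform.nondeg _ hBv
    have := of.injective (by rw [this, map_zero] : of v = of 0)
    exact this
  refine ⟨H⁻¹, H * A, ?_, ?_, ?_⟩
  · rw [Matrix.transpose_nonsing_inv, hHsymm]
  · rw [Matrix.transpose_mul, hHsymm, hcomm]
  · rw [← Matrix.mul_assoc, Matrix.nonsing_inv_mul H (Ne.isUnit hdet), Matrix.one_mul]
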